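/- arXiv:1701.05139 — 5 statements merged into one kernel-verified Lean document; each statement's English description precedes it below -/
import Mathlib

section
/- A functor F : A ⥤ B between groupoids is final (i.e., for every object b of B the comma category b/F is nonempty and connected) if and only if F is full and essentially surjective on objects. -/
open CategoryTheory

universe w v u

/-- `F` is a discrete fibration: every morphism into the image of `F` with prescribed
codomain has a unique lift. -/
def IsDiscreteFibration {A : Type*} [Category A] {B : Type*} [Category B] (F : A ⥤ B) : Prop :=
  ∀ {a' : A} {b : B} (β : b ⟶ F.obj a'),
    ∃! p : Σ a : A, a ⟶ a',
      (⟨F.obj p.1, F.map p.2⟩ : Σ x : B, x ⟶ F.obj a') = ⟨b, β⟩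

/-- `F` is a discrete opfibration: every morphism out of the image of `F` with prescribed
domain has a unique lift. -/
def IsDiscreteOpfibration {A : Type*} [Category A] {B : Type*} [Category B] (F : A ⥤ B) : Prop :=
  ∀ {a : A} {b : B} (β : F.obj a ⟶ b),
    ∃! p : Σ a' : A, a ⟶ a',
      (⟨F.obj p.1, F.map p.2⟩ : Σ x : B, F.obj a ⟶ x) = ⟨b, β⟩

lemma hom_of_zigzag {A : Type u} [Groupoid A] {B : Type u} [Groupoid B] (F : A ⥤ B) (b : B)
    {x y : StructuredArrow b F} (h : Zigzag x y) : Nonempty (x ⟶ y) := by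
  induction h with
  | refl => exact ⟨𝟙 _⟩
  | tail _ hzag ih =>
    obtain ⟨f⟩ := ih
    rcases hzag with ⟨⟨g⟩⟩ | ⟨⟨g⟩⟩
    · exact ⟨f ≫ g⟩
    · refine ⟨f ≫ StructuredArrow.homMk (Groupoid.inv g.right) ?_⟩
      have hw := g.w
      replace hw := (StructuredArrow.w g).symm
      rw [hw, Category.assoc, ← F.map_comp]
      simp

/-- A functor between groupoids is final iff it is full and essentially surjective. -/
theorem final_iff_full_and_essSurj {A : Type u} [Groupoid A] {B : Type u} [Groupoid B]
    (F : A ⥤ B) : F.Final ↔ (F.Full ∧ F.EssSurj) := by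
  constructor
  · intro hF
    constructor
    · refine ⟨fun {a a'} φ => ?_⟩
      have h := isPreconnected_zigzag (J := StructuredArrow (F.obj a) F)
        (StructuredArrow.mk (𝟙 (F.obj a))) (StructuredArrow.mk φ)
      obtain ⟨g⟩ := hom_of_zigzag F _ h
      refine ⟨g.right, ?_⟩
      have := g.w
      simpa using this
    · refine ⟨fun b => ?_⟩
      obtain ⟨x⟩ : Nonempty (StructuredArrow b F) := inferInstance
      exact ⟨x.right, ⟨(Groupoid.isoEquivHom _ _ |>.symm x.hom).symm⟩⟩
  · rintro ⟨hfull, hsurj⟩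
    refine ⟨fun b => ?_⟩
    have : Nonempty (StructuredArrow b F) :=
      ⟨StructuredArrow.mk (F.objObjPreimageIso b).inv⟩
    refine zigzag_isConnected fun x y => ?_
    refine Relation.ReflTransGen.single (Or.inl ⟨?_⟩)
    refine StructuredArrow.homMk (F.preimage (Groupoid.inv x.hom ≫ y.hom)) ?_
    simp
end

section
/- Let A and E be groupoids and B a category, and let Q : E ⥤ A, P : E ⥤ B be functors. Then the pair (Q, P) forms a discrete two-sided fibration if and only if the induced functor ⟨Q, P⟩ : E ⥤ A × B is a discrete fibration. -/
open CategoryTheory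

universe w v u

/-- A span `(Q : E ⥤ A, P : E ⥤ B)` is a discrete two-sided fibration if:
(i) every arrow `b ⟶ P e'` has a unique `Q`-vertical lift ending at `e'`;
(ii) every arrow `Q e ⟶ a` has a unique `P`-vertical lift starting at `e`;
(iii) every `ε : e ⟶ e'` factors as a `P`-vertical lift of `Q ε` followed by a
`Q`-vertical lift of `P ε`. -/
def IsDiscreteTwoSidedFibration {E A B : Type*} [Category E] [Category A] [Category B]
    (Q : E ⥤ A) (P : E ⥤ B) : Prop :=
  (∀ {e' : E} {b : B} (β : b ⟶ P.obj e'),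
    ∃! p : Σ e : E, e ⟶ e',
      (⟨P.obj p.1, P.map p.2⟩ : Σ x : B, x ⟶ P.obj e') = ⟨b, β⟩ ∧
      (⟨Q.obj p.1, Q.map p.2⟩ : Σ x : A, x ⟶ Q.obj e') = ⟨Q.obj e', 𝟙 (Q.obj e')⟩) ∧
  (∀ {e : E} {a : A} (α : Q.obj e ⟶ a),
    ∃! p : Σ e' : E, e ⟶ e',
      (⟨Q.obj p.1, Q.map p.2⟩ : Σ x : A, Q.obj e ⟶ x) = ⟨a, α⟩ ∧
      (⟨P.obj p.1, P.map p.2⟩ : Σ x : B, P.obj e ⟶ x) = ⟨P.obj e, 𝟙 (P.obj e)⟩) ∧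
  (∀ {e e' : E} (ε : e ⟶ e'),
    ∃ (m : E) (u : e ⟶ m) (v : m ⟶ e'),
      u ≫ v = ε ∧
      (⟨Q.obj m, Q.map u⟩ : Σ x : A, Q.obj e ⟶ x) = ⟨Q.obj e', Q.map ε⟩ ∧
      (⟨P.obj m, P.map u⟩ : Σ x : B, P.obj e ⟶ x) = ⟨P.obj e, 𝟙 (P.obj e)⟩ ∧
      (⟨Q.obj m, Q.map v⟩ : Σ x : A, x ⟶ Q.obj e') = ⟨Q.obj e', 𝟙 (Q.obj e')⟩ ∧
      (⟨P.obj m, P.map v⟩ : Σ x : B, x ⟶ P.obj e') = ⟨P.obj e, P.map ε⟩)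


section SigmaHelpers

variable {C : Type*} [Category C]

lemma sigL {c x y : C} {f : x ⟶ c} {g : y ⟶ c} :
    (⟨x, f⟩ : Σ z : C, z ⟶ c) = ⟨y, g⟩ ↔ ∃ h : x = y, f = eqToHom h ≫ g := by
  constructor
  · intro H
    obtain ⟨h1, h2⟩ := Sigma.mk.inj_iff.mp H
    subst h1
    exact ⟨rfl, by simpa using eq_of_heq h2⟩
  · rintro ⟨rfl, rfl⟩; simp

lemma sigR {c x y : C} {f : c ⟶ x} {g : c ⟶ y} :
    (⟨x, f⟩ : Σ z : C, c ⟶ z) = ⟨y, g⟩ ↔ ∃ h : x = y, f = g ≫ eqToHom h.symm := by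
  constructor
  · intro H
    obtain ⟨h1, h2⟩ := Sigma.mk.inj_iff.mp H
    subst h1
    exact ⟨rfl, by simpa using eq_of_heq h2⟩
  · rintro ⟨rfl, rfl⟩; simp

end SigmaHelpers

section PairHelpers

variable {E A B : Type*} [Category E] [Category A] [Category B] (Q : E ⥤ A) (P : E ⥤ B)

lemma pairL {e e' : E} {a : A} {b : B} {ε : e ⟶ e'} {α : a ⟶ Q.obj e'} {β : b ⟶ P.obj e'} :
    ((⟨(Q.prod' P).obj e, (Q.prod' P).map ε⟩ : Σ x : A × B, x ⟶ (Q.prod' P).obj e')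
      = ⟨(a, b), (α, β)⟩) ↔
    ((⟨Q.obj e, Q.map ε⟩ : Σ x : A, x ⟶ Q.obj e') = ⟨a, α⟩ ∧
     (⟨P.obj e, P.map ε⟩ : Σ x : B, x ⟶ P.obj e') = ⟨b, β⟩) := by
  constructor
  · intro H
    obtain ⟨h1, h2⟩ := Sigma.mk.inj_iff.mp H
    have ha : Q.obj e = a := congrArg Prod.fst h1
    have hb : P.obj e = b := congrArg Prod.snd h1
    subst ha; subst hb
    have h2' := eq_of_heq h2
    have hα : Q.map ε = α := congrArg Prod.fst h2'
    have hβ : P.map ε = β := congrArg Prod.snd h2'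
    subst hα; subst hβ
    exact ⟨rfl, rfl⟩
  · rintro ⟨H1, H2⟩
    obtain ⟨ha, hα⟩ := Sigma.mk.inj_iff.mp H1
    obtain ⟨hb, hβ⟩ := Sigma.mk.inj_iff.mp H2
    subst ha; subst hb
    obtain rfl := eq_of_heq hα
    obtain rfl := eq_of_heq hβ
    rfl

end PairHelpers

/-- For groupoids `A`, `E` and a category `B`, a span `(Q, P)` is a discrete two-sided
fibration iff `⟨Q, P⟩ : E ⥤ A × B` is a discrete fibration. -/
theorem twoSided_iff_discreteFibration_pair {E : Type u} [Groupoid E] {A : Type u} [Groupoid A]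
    {B : Type u} [Category.{u} B] (Q : E ⥤ A) (P : E ⥤ B) :
    IsDiscreteTwoSidedFibration Q P ↔ IsDiscreteFibration (Q.prod' P) := by
  constructor
  · rintro ⟨H1, H2, H3⟩
    intro e' b β
    obtain ⟨a, bb⟩ := b
    obtain ⟨α, β⟩ := β
    -- α : a ⟶ Q.obj e', β : bb ⟶ P.obj e'
    obtain ⟨⟨m, v⟩, ⟨hvP, hvQ⟩, uniqv⟩ := H1 (β : bb ⟶ P.obj e')
    obtain ⟨hQm, hQv⟩ := sigL.mp hvQ
    obtain ⟨hPm, hPv⟩ := sigL.mp hvP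
    -- hQm : Q.obj m = Q.obj e', hPm : P.obj m = bb
    obtain ⟨⟨n, u⟩, ⟨huQ, huP⟩, uniqu⟩ := H2 (eqToHom hQm ≫ Groupoid.inv α)
    obtain ⟨hQn, hQu⟩ := sigR.mp huQ
    obtain ⟨hPn, hPu⟩ := sigR.mp huP
    refine ⟨⟨n, Groupoid.inv u ≫ v⟩, ?_, ?_⟩
    · refine (pairL Q P).mpr ⟨sigL.mpr ⟨hQn, ?_⟩, sigL.mpr ⟨hPn.trans hPm, ?_⟩⟩
      · simp [hQu, hQv, Groupoid.inv_eq_inv, Functor.map_inv]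
      · simp [hPu, hPv, Groupoid.inv_eq_inv, Functor.map_inv]
    · rintro ⟨n₂, ε₂⟩ hp
      obtain ⟨hpQ, hpP⟩ := (pairL Q P).mp hp
      obtain ⟨m₂, u₂, v₂, hcomp, hQu₂, hPu₂, hQv₂, hPv₂⟩ := H3 ε₂
      have hv₂ : (⟨m₂, v₂⟩ : Σ x : E, x ⟶ e') = ⟨m, v⟩ :=
        uniqv ⟨m₂, v₂⟩ ⟨hPv₂.trans hpP, hQv₂⟩
      obtain ⟨hm₂, hvv⟩ := Sigma.mk.inj_iff.mp hv₂
      subst hm₂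
      have hvv' : v₂ = v := eq_of_heq hvv
      subst hvv'
      obtain ⟨hn₂, hQε₂⟩ := sigL.mp hpQ
      obtain ⟨hQm', hQu₂'⟩ := sigR.mp hQu₂
      obtain ⟨hPm', hPu₂'⟩ := sigR.mp hPu₂
      have hu₂ : (⟨n₂, Groupoid.inv u₂⟩ : Σ x : E, m₂ ⟶ x) = ⟨n, u⟩ := by
        refine uniqu ⟨n₂, Groupoid.inv u₂⟩ ⟨sigR.mpr ⟨hn₂, ?_⟩, sigR.mpr ⟨hPm'.symm, ?_⟩⟩
        · simp [Groupoid.inv_eq_inv, Functor.map_inv, hQu₂', hQε₂]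
        · simp [Groupoid.inv_eq_inv, Functor.map_inv, hPu₂']
      obtain ⟨hn, huu⟩ := Sigma.mk.inj_iff.mp hu₂
      subst hn
      have huu' : Groupoid.inv u₂ = u := eq_of_heq huu
      have hu₂u : u₂ = Groupoid.inv u := by
        rw [← huu']; simp
      refine Sigma.ext rfl ?_
      simp only [heq_eq_eq]
      rw [← hcomp, hu₂u]
  · intro D
    refine ⟨?_, ?_, ?_⟩
    · intro e' b β
      obtain ⟨⟨m, v⟩, hv, uniq⟩ :=
        D (show ((Q.obj e', b) : A × B) ⟶ (Q.prod' P).obj e' from (𝟙 (Q.obj e'), β))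
      obtain ⟨hQ, hP⟩ := (pairL Q P).mp hv
      refine ⟨⟨m, v⟩, ⟨hP, hQ⟩, ?_⟩
      rintro ⟨m₂, v₂⟩ ⟨h1, h2⟩
      exact uniq ⟨m₂, v₂⟩ ((pairL Q P).mpr ⟨h2, h1⟩)
    · intro e a α
      obtain ⟨⟨m, u⟩, hu, uniq⟩ :=
        D (show ((a, P.obj e) : A × B) ⟶ (Q.prod' P).obj e from (Groupoid.inv α, 𝟙 (P.obj e)))
      obtain ⟨hQ, hP⟩ := (pairL Q P).mp hu
      obtain ⟨hQm, hQu⟩ := sigL.mp hQ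
      obtain ⟨hPm, hPu⟩ := sigL.mp hP
      refine ⟨⟨m, Groupoid.inv u⟩, ⟨sigR.mpr ⟨hQm, ?_⟩, sigR.mpr ⟨hPm, ?_⟩⟩, ?_⟩
      · simp [Groupoid.inv_eq_inv, Functor.map_inv, hQu]
      · simp [Groupoid.inv_eq_inv, Functor.map_inv, hPu]
      · rintro ⟨e₂, ε⟩ ⟨c1, c2⟩
        obtain ⟨h, hQε⟩ := sigR.mp c1
        obtain ⟨h', hPε⟩ := sigR.mp c2
        have key : (⟨e₂, Groupoid.inv ε⟩ : Σ x : E, x ⟶ e) = ⟨m, u⟩ := by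
          refine uniq ⟨e₂, Groupoid.inv ε⟩ ((pairL Q P).mpr ⟨sigL.mpr ⟨h, ?_⟩, sigL.mpr ⟨h', ?_⟩⟩)
          · simp [Groupoid.inv_eq_inv, Functor.map_inv, hQε]
          · simp [Groupoid.inv_eq_inv, Functor.map_inv, hPε]
        obtain ⟨he₂, hεu⟩ := Sigma.mk.inj_iff.mp key
        subst he₂
        have : Groupoid.inv ε = u := eq_of_heq hεu
        refine Sigma.ext rfl ?_
        simp only [heq_eq_eq]
        rw [← this]; simp
    · intro e e' ε
      obtain ⟨⟨m, v⟩, hv, _⟩ :=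
        D (show ((Q.obj e', P.obj e) : A × B) ⟶ (Q.prod' P).obj e' from (𝟙 (Q.obj e'), P.map ε))
      obtain ⟨hQ, hP⟩ := (pairL Q P).mp hv
      obtain ⟨hQm, hQv⟩ := sigL.mp hQ
      obtain ⟨hPm, hPv⟩ := sigL.mp hP
      have hPεiso : IsIso (P.map ε) := by
        have : P.map ε = eqToHom hPm.symm ≫ P.map v := by rw [hPv]; simp
        rw [this]; infer_instance
      refine ⟨m, ε ≫ Groupoid.inv v, v, by simp, sigR.mpr ⟨hQm, ?_⟩, sigR.mpr ⟨hPm, ?_⟩, hQ, hP⟩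
      · simp [Groupoid.inv_eq_inv, Functor.map_inv, hQv]
      · simp [Groupoid.inv_eq_inv, Functor.map_inv, hPv]
end

section
/- Every functor F : A ⥤ B factors as F = D ∘ E where E is final and D is a discrete fibration, and this factorization is unique up to isomorphism (i.e., (final, discrete fibration) is an orthogonal factorization system on Cat). -/
open CategoryTheory

universe w v u

section Helpers


variable {B : Type*} [Category B]

lemma sig_eq_of {z b b' : B} (h : b = b') {β : b ⟶ z} {β' : b' ⟶ z}
    (hh : β = eqToHom h ≫ β') : (⟨b, β⟩ : Σ x, x ⟶ z) = ⟨b', β'⟩ := by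
  subst h; simpa using hh

lemma sig_fst {z b b' : B} {β : b ⟶ z} {β' : b' ⟶ z}
    (hs : (⟨b, β⟩ : Σ x, x ⟶ z) = ⟨b', β'⟩) : b = b' := congrArg Sigma.fst hs

lemma sig_snd {z b b' : B} (h : b = b') {β : b ⟶ z} {β' : b' ⟶ z}
    (hs : (⟨b, β⟩ : Σ x, x ⟶ z) = ⟨b', β'⟩) : β = eqToHom h ≫ β' := by
  subst h
  rw [eqToHom_refl, Category.id_comp]
  simpa using hs

end Helpers

section DF

variable {Y' : Type*} [Category Y'] {Bb : Type*} [Category Bb] {P : Y' ⥤ Bb}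

lemma df_unique (hP : IsDiscreteFibration P) {a' s s' : Y'} (σ : s ⟶ a') (σ' : s' ⟶ a')
    (h : (⟨P.obj s, P.map σ⟩ : Σ x, x ⟶ P.obj a') = ⟨P.obj s', P.map σ'⟩) :
    (⟨s, σ⟩ : Σ t, t ⟶ a') = ⟨s', σ'⟩ :=
  (hP (P.map σ)).unique rfl h.symm

end DF

section Lifting

variable {X : Type*} [Category X] {Y : Type*} [Category Y]
  {Y' : Type*} [Category Y'] {Bb : Type*} [Category Bb]
  {J : X ⥤ Y} {P : Y' ⥤ Bb} {T : X ⥤ Y'} {S : Y ⥤ Bb}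

lemma theta (hcomm : J ⋙ S = T ⋙ P) (x : X) : S.obj (J.obj x) = P.obj (T.obj x) :=
  Functor.congr_obj hcomm x

lemma hcomm_map (hcomm : J ⋙ S = T ⋙ P) {x x' : X} (ξ : x ⟶ x') :
    P.map (T.map ξ) = eqToHom (theta hcomm x).symm ≫ S.map (J.map ξ) ≫ eqToHom (theta hcomm x') := by
  have := Functor.congr_hom hcomm ξ
  simp only [Functor.comp_map] at this
  rw [this]
  simp

noncomputable def sigp (hP : IsDiscreteFibration P) (hcomm : J ⋙ S = T ⋙ P)
    (y : Y) (f : StructuredArrow y J) : Σ c : Y', c ⟶ T.obj f.right :=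
  (hP (S.map f.hom ≫ eqToHom (theta hcomm f.right))).choose

lemma sigp_spec (hP : IsDiscreteFibration P) (hcomm : J ⋙ S = T ⋙ P)
    (y : Y) (f : StructuredArrow y J) :
    (⟨P.obj (sigp hP hcomm y f).1, P.map (sigp hP hcomm y f).2⟩ : Σ x, x ⟶ P.obj (T.obj f.right))
      = ⟨S.obj y, S.map f.hom ≫ eqToHom (theta hcomm f.right)⟩ :=
  (hP (S.map f.hom ≫ eqToHom (theta hcomm f.right))).choose_spec.1

lemma sigp_obj (hP : IsDiscreteFibration P) (hcomm : J ⋙ S = T ⋙ P)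
    (y : Y) (f : StructuredArrow y J) :
    P.obj (sigp hP hcomm y f).1 = S.obj y :=
  sig_fst (sigp_spec hP hcomm y f)

lemma sigp_map (hP : IsDiscreteFibration P) (hcomm : J ⋙ S = T ⋙ P)
    (y : Y) (f : StructuredArrow y J) :
    P.map (sigp hP hcomm y f).2
      = eqToHom (sigp_obj hP hcomm y f) ≫ S.map f.hom ≫ eqToHom (theta hcomm f.right) :=
  sig_snd _ (sigp_spec hP hcomm y f)

lemma sigp_step (hP : IsDiscreteFibration P) (hcomm : J ⋙ S = T ⋙ P)
    (y : Y) {f g : StructuredArrow y J} (m : f ⟶ g) :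
    (⟨(sigp hP hcomm y f).1, (sigp hP hcomm y f).2 ≫ T.map m.right⟩ : Σ c, c ⟶ T.obj g.right)
      = sigp hP hcomm y g := by
  rw [← Sigma.eta (sigp hP hcomm y g)]
  apply df_unique hP
  have h1 : P.map ((sigp hP hcomm y f).2 ≫ T.map m.right)
      = eqToHom (sigp_obj hP hcomm y f) ≫ S.map g.hom ≫ eqToHom (theta hcomm g.right) := by
    rw [P.map_comp, sigp_map hP hcomm y f, hcomm_map hcomm m.right, ← StructuredArrow.w m,
      S.map_comp]
    simp
  refine (sig_eq_of ((sigp_obj hP hcomm y f).trans (sigp_obj hP hcomm y g).symm) ?_)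
  rw [h1, sigp_map hP hcomm y g]
  simp

lemma sigp_fst_eq (hJ : J.Final) (hP : IsDiscreteFibration P) (hcomm : J ⋙ S = T ⋙ P)
    (y : Y) (f g : StructuredArrow y J) :
    (sigp hP hcomm y f).1 = (sigp hP hcomm y g).1 := by
  have : IsConnected (StructuredArrow y J) := hJ.out y
  exact constant_of_preserves_morphisms (fun f => (sigp hP hcomm y f).1)
    (fun f g m => congrArg Sigma.fst (sigp_step hP hcomm y m)) f g

noncomputable def chx (hJ : J.Final) (y : Y) : StructuredArrow y J :=
  have : IsConnected (StructuredArrow y J) := hJ.out y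
  Classical.arbitrary _

end Lifting

section Lifting2

variable {X : Type*} [Category X] {Y : Type*} [Category Y]
  {Y' : Type*} [Category Y'] {Bb : Type*} [Category Bb]
  {J : X ⥤ Y} {P : Y' ⥤ Bb} {T : X ⥤ Y'} {S : Y ⥤ Bb}

variable (hJ : J.Final) (hP : IsDiscreteFibration P) (hcomm : J ⋙ S = T ⋙ P)

noncomputable def Lobj (y : Y) : Y' := (sigp hP hcomm y (chx hJ y)).1

lemma Lobj_eq (y : Y) (f : StructuredArrow y J) :
    Lobj hJ hP hcomm y = (sigp hP hcomm y f).1 :=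
  sigp_fst_eq hJ hP hcomm y _ f

lemma Lobj_P (y : Y) : P.obj (Lobj hJ hP hcomm y) = S.obj y :=
  sigp_obj hP hcomm y (chx hJ y)

noncomputable def mlift {y y' : Y} (η : y ⟶ y') : Σ m : Y', m ⟶ Lobj hJ hP hcomm y' :=
  (hP (S.map η ≫ eqToHom (Lobj_P hJ hP hcomm y').symm)).choose

lemma mlift_spec {y y' : Y} (η : y ⟶ y') :
    (⟨P.obj (mlift hJ hP hcomm η).1, P.map (mlift hJ hP hcomm η).2⟩ :
        Σ x, x ⟶ P.obj (Lobj hJ hP hcomm y'))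
      = ⟨S.obj y, S.map η ≫ eqToHom (Lobj_P hJ hP hcomm y').symm⟩ :=
  (hP (S.map η ≫ eqToHom (Lobj_P hJ hP hcomm y').symm)).choose_spec.1

lemma mlift_obj {y y' : Y} (η : y ⟶ y') :
    P.obj (mlift hJ hP hcomm η).1 = S.obj y := sig_fst (mlift_spec hJ hP hcomm η)

lemma mlift_map {y y' : Y} (η : y ⟶ y') :
    P.map (mlift hJ hP hcomm η).2
      = eqToHom (mlift_obj hJ hP hcomm η) ≫ S.map η ≫ eqToHom (Lobj_P hJ hP hcomm y').symm :=
  sig_snd _ (mlift_spec hJ hP hcomm η)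

lemma mlift_fst {y y' : Y} (η : y ⟶ y') :
    (mlift hJ hP hcomm η).1 = Lobj hJ hP hcomm y := by
  set g : StructuredArrow y J := StructuredArrow.mk (η ≫ (chx hJ y').hom) with hg
  have key : (⟨(mlift hJ hP hcomm η).1,
      (mlift hJ hP hcomm η).2 ≫ (sigp hP hcomm y' (chx hJ y')).2⟩ :
        Σ c, c ⟶ T.obj (chx hJ y').right) = sigp hP hcomm y g := by
    rw [← Sigma.eta (sigp hP hcomm y g)]
    apply df_unique hP
    erw [P.map_comp, mlift_map hJ hP hcomm η, sigp_map hP hcomm y' (chx hJ y'),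
      sigp_map hP hcomm y g]
    apply sig_eq_of ((mlift_obj hJ hP hcomm η).trans (sigp_obj hP hcomm y g).symm)
    have : g.hom = η ≫ (chx hJ y').hom := rfl
    rw [this, S.map_comp]
    simp
    erw [Category.assoc, Category.assoc, eqToHom_trans_assoc]
    simp
  exact (congrArg Sigma.fst key).trans (Lobj_eq hJ hP hcomm y g).symm

noncomputable def Lmap {y y' : Y} (η : y ⟶ y') :
    Lobj hJ hP hcomm y ⟶ Lobj hJ hP hcomm y' :=
  eqToHom (mlift_fst hJ hP hcomm η).symm ≫ (mlift hJ hP hcomm η).2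

lemma Lmap_P {y y' : Y} (η : y ⟶ y') :
    P.map (Lmap hJ hP hcomm η)
      = eqToHom (Lobj_P hJ hP hcomm y) ≫ S.map η ≫ eqToHom (Lobj_P hJ hP hcomm y').symm := by
  unfold Lmap
  erw [P.map_comp, eqToHom_map, mlift_map hJ hP hcomm η]
  simp

lemma hom_eq_of_sig {C : Type*} [Category C] {s z : C} {σ σ' : s ⟶ z}
    (h : (⟨s, σ⟩ : Σ t, t ⟶ z) = ⟨s, σ'⟩) : σ = σ' := by simpa using h

noncomputable def Lf : Y ⥤ Y' where
  obj := Lobj hJ hP hcomm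
  map := Lmap hJ hP hcomm
  map_id y := by
    apply hom_eq_of_sig
    apply df_unique hP
    apply sig_eq_of rfl
    rw [Lmap_P hJ hP hcomm]
    simp
  map_comp {y y' y''} η η' := by
    apply hom_eq_of_sig
    apply df_unique hP
    apply sig_eq_of rfl
    rw [P.map_comp, Lmap_P hJ hP hcomm, Lmap_P hJ hP hcomm, Lmap_P hJ hP hcomm, S.map_comp]
    simp

lemma Lf_comp_P : Lf hJ hP hcomm ⋙ P = S :=
  CategoryTheory.Functor.ext (Lobj_P hJ hP hcomm) (fun _ _ η => Lmap_P hJ hP hcomm η)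

lemma Lobj_J (x : X) : Lobj hJ hP hcomm (J.obj x) = T.obj x := by
  have key : sigp hP hcomm (J.obj x) (StructuredArrow.mk (𝟙 (J.obj x)))
      = ⟨T.obj x, 𝟙 (T.obj x)⟩ := by
    rw [← Sigma.eta (sigp hP hcomm (J.obj x) (StructuredArrow.mk (𝟙 (J.obj x))))]
    apply df_unique hP
    rw [sigp_map hP hcomm (J.obj x) (StructuredArrow.mk (𝟙 (J.obj x)))]
    apply sig_eq_of ((sigp_obj hP hcomm (J.obj x) (StructuredArrow.mk (𝟙 (J.obj x)))).trans
      (theta hcomm x))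
    have : (StructuredArrow.mk (𝟙 (J.obj x))).hom = 𝟙 (J.obj x) := rfl
    rw [this]
    simp
  exact (Lobj_eq hJ hP hcomm (J.obj x) _).trans (congrArg Sigma.fst key)

lemma J_comp_Lf : J ⋙ Lf hJ hP hcomm = T := by
  refine CategoryTheory.Functor.ext (Lobj_J hJ hP hcomm) fun x x' ξ => ?_
  show Lmap hJ hP hcomm (J.map ξ) = _
  apply hom_eq_of_sig
  have h2 : P.map (eqToHom (Lobj_J hJ hP hcomm x) ≫ T.map ξ ≫ eqToHom (Lobj_J hJ hP hcomm x').symm)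
      = eqToHom (Lobj_P hJ hP hcomm (J.obj x)) ≫ S.map (J.map ξ)
          ≫ eqToHom (Lobj_P hJ hP hcomm (J.obj x')).symm := by
    rw [P.map_comp, P.map_comp, eqToHom_map, eqToHom_map, hcomm_map hcomm ξ]
    simp
  refine df_unique hP _ _ ?_
  apply sig_eq_of rfl
  erw [Lmap_P hJ hP hcomm, h2]
  simp

end Lifting2

section Lifting3

variable {X : Type*} [Category X] {Y : Type*} [Category Y]
  {Y' : Type*} [Category Y'] {Bb : Type*} [Category Bb]
  {J : X ⥤ Y} {P : Y' ⥤ Bb} {T : X ⥤ Y'} {S : Y ⥤ Bb}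

lemma lift_unique (hJ : J.Final) (hP : IsDiscreteFibration P) (hcomm : J ⋙ S = T ⋙ P)
    (L₁ L₂ : Y ⥤ Y')
    (e₁ : J ⋙ L₁ = T) (p₁ : L₁ ⋙ P = S) (e₂ : J ⋙ L₂ = T) (p₂ : L₂ ⋙ P = S) :
    L₁ = L₂ := by
  have hobj : ∀ y, L₁.obj y = L₂.obj y := by
    intro y
    set f := chx hJ y
    have tau : ∀ (L : Y ⥤ Y') (e : J ⋙ L = T) (p : L ⋙ P = S),
        (⟨P.obj (L.obj y), P.map (L.map f.hom ≫ eqToHom (Functor.congr_obj e f.right))⟩ :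
          Σ x, x ⟶ P.obj (T.obj f.right))
        = ⟨S.obj y, S.map f.hom ≫ eqToHom (theta hcomm f.right)⟩ := by
      intro L e p
      apply sig_eq_of (Functor.congr_obj p y)
      rw [P.map_comp, eqToHom_map]
      have := Functor.congr_hom p f.hom
      simp only [Functor.comp_map] at this
      rw [this]
      simp
    have := df_unique hP (L₁.map f.hom ≫ eqToHom (Functor.congr_obj e₁ f.right))
      (L₂.map f.hom ≫ eqToHom (Functor.congr_obj e₂ f.right))
      ((tau L₁ e₁ p₁).trans (tau L₂ e₂ p₂).symm)
    exact congrArg Sigma.fst this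
  refine CategoryTheory.Functor.ext hobj fun y y' η => ?_
  have key := df_unique hP (L₁.map η) (L₂.map η ≫ eqToHom (hobj y').symm) ?_
  · exact sig_snd (hobj y) key
  · have q1 := Functor.congr_hom p₁ η
    have q2 := Functor.congr_hom p₂ η
    simp only [Functor.comp_map] at q1 q2
    apply sig_eq_of ((Functor.congr_obj p₁ y).trans (Functor.congr_obj p₂ y).symm)
    rw [P.map_comp, eqToHom_map, q1, q2]
    simp

end Lifting3

section Construction

variable {A : Type u} [Category.{v} A] {B : Type u} [Category.{v} B] (F : A ⥤ B)

def CRel (b : B) (p q : Σ a : A, b ⟶ F.obj a) : Prop := ∃ f : p.1 ⟶ q.1, p.2 ≫ F.map f = q.2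

def Gb (b : B) : Type (max u v) := Quot (CRel F b)

def Gmap {b b' : B} (ρ : b' ⟶ b) : Gb F b → Gb F b' :=
  Quot.lift (fun p => Quot.mk _ ⟨p.1, ρ ≫ p.2⟩) (by
    rintro p q ⟨f, hf⟩
    exact Quot.sound ⟨f, by rw [Category.assoc, hf]⟩)

lemma Gmap_mk {b b' : B} (ρ : b' ⟶ b) (p : Σ a : A, b ⟶ F.obj a) :
    Gmap F ρ (Quot.mk _ p) = Quot.mk _ (⟨p.1, ρ ≫ p.2⟩ : Σ a : A, b' ⟶ F.obj a) := rfl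

lemma Gmap_id (b : B) (x : Gb F b) : Gmap F (𝟙 b) x = x := by
  induction x using Quot.ind with
  | _ p => rw [Gmap_mk]; congr 1; rw [Category.id_comp]

lemma Gmap_comp {b b' b'' : B} (ρ : b' ⟶ b) (ρ' : b'' ⟶ b') (x : Gb F b) :
    Gmap F ρ' (Gmap F ρ x) = Gmap F (ρ' ≫ ρ) x := by
  induction x using Quot.ind with
  | _ p => rw [Gmap_mk, Gmap_mk, Gmap_mk]; congr 1; rw [Category.assoc]

structure Cobj : Type (max u v) where
  base : B
  cls : Gb F base

instance CobjCat : Category.{v} (Cobj F) where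
  Hom c c' := {β : c.base ⟶ c'.base // Gmap F β c'.cls = c.cls}
  id c := ⟨𝟙 c.base, Gmap_id F c.base c.cls⟩
  comp {c c' c''} φ ψ := ⟨φ.1 ≫ ψ.1, by rw [← Gmap_comp, ψ.2, φ.2]⟩
  id_comp φ := Subtype.ext (Category.id_comp _)
  comp_id φ := Subtype.ext (Category.comp_id _)
  assoc φ ψ χ := Subtype.ext (Category.assoc _ _ _)

def Dfun : Cobj F ⥤ B where
  obj c := c.base
  map φ := φ.1
  map_id _ := rfl
  map_comp _ _ := rfl

lemma E_hom {a a' : A} (f : a ⟶ a') :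
    Gmap F (F.map f) (Quot.mk _ (⟨a', 𝟙 (F.obj a')⟩ : Σ x : A, F.obj a' ⟶ F.obj x))
      = Quot.mk _ (⟨a, 𝟙 (F.obj a)⟩ : Σ x : A, F.obj a ⟶ F.obj x) := by
  rw [Gmap_mk]
  exact (Quot.sound ⟨f, by simp⟩).symm

def Efun : A ⥤ Cobj F where
  obj a := ⟨F.obj a, Quot.mk _ ⟨a, 𝟙 (F.obj a)⟩⟩
  map {a a'} f := ⟨F.map f, E_hom F f⟩
  map_id a := Subtype.ext (F.map_id a)
  map_comp f g := Subtype.ext (F.map_comp f g)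

lemma Efun_comp_Dfun : Efun F ⋙ Dfun F = F := rfl

lemma Dfun_df : IsDiscreteFibration (Dfun F) := by
  intro c' b β
  refine ⟨⟨⟨b, Gmap F β c'.2⟩, ⟨β, rfl⟩⟩, rfl, ?_⟩
  rintro ⟨⟨b₀, x₀⟩, ⟨β₀, h₀⟩⟩ hs
  have hb : b₀ = b := congrArg Sigma.fst hs
  subst hb
  have hβ : β₀ = β := by
    have h := sig_snd rfl hs
    exact h.trans (Category.id_comp β)
  clear hs
  subst hβ
  have h₀' : Gmap F β₀ c'.2 = x₀ := h₀
  have hobj : (⟨b₀, x₀⟩ : Cobj F) = ⟨b₀, Gmap F β₀ c'.2⟩ := by rw [h₀']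
  refine @sig_eq_of (Cobj F) (CobjCat F) c' _ _ hobj (β := ⟨β₀, h₀⟩) (β' := ⟨β₀, rfl⟩) ?_
  refine Subtype.ext ?_
  have hv : ((eqToHom hobj : (⟨b₀, x₀⟩ : Cobj F) ⟶ ⟨b₀, Gmap F β₀ c'.2⟩)).val = 𝟙 b₀ := by
    show (Dfun F).map (eqToHom hobj) = 𝟙 b₀
    rw [eqToHom_map (Dfun F) hobj]
    rfl
  show β₀ = (eqToHom hobj :
      (⟨b₀, x₀⟩ : Cobj F) ⟶ ⟨b₀, Gmap F β₀ c'.2⟩).val ≫ β₀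
  rw [hv, Category.id_comp]

end Construction

section Final

variable {A : Type u} [Category.{v} A] {B : Type u} [Category.{v} B] (F : A ⥤ B)

def sobj (c : Cobj F) (p : Σ a : A, c.base ⟶ F.obj a) (hp : Quot.mk _ p = c.cls) :
    StructuredArrow c (Efun F) :=
  StructuredArrow.mk (Y := p.1) ⟨p.2, by
    show Gmap F p.2 (Quot.mk _ (⟨p.1, 𝟙 (F.obj p.1)⟩ : Σ x : A, F.obj p.1 ⟶ F.obj x)) = c.cls
    rw [Gmap_mk]
    have h1 : (⟨p.1, p.2 ≫ 𝟙 (F.obj p.1)⟩ : Σ a : A, c.base ⟶ F.obj a) = p := by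
      rw [Category.comp_id]
    rw [h1, hp]⟩

lemma szig (c : Cobj F) (p q : Σ a : A, c.base ⟶ F.obj a)
    (h : Relation.EqvGen (CRel F c.base) p q) :
    ∀ (hp : Quot.mk _ p = c.cls) (hq : Quot.mk _ q = c.cls),
      Zigzag (sobj F c p hp) (sobj F c q hq) := by
  induction h with
  | rel p q hr =>
    intro hp hq
    obtain ⟨f, hf⟩ := hr
    exact Relation.ReflTransGen.single
      (Or.inl ⟨StructuredArrow.homMk f (Subtype.ext hf)⟩)
  | refl p => intro hp hq; exact Relation.ReflTransGen.refl
  | symm p q h ih => intro hp hq; exact zigzag_symmetric.symm _ _ (ih hq hp)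
  | trans p q r h1 h2 ih1 ih2 =>
    intro hp hr
    have hq : Quot.mk _ q = c.cls := (Quot.eqvGen_sound h1).symm.trans hp
    exact (ih1 hp hq).trans (ih2 hq hr)

lemma mk_of_obj (c : Cobj F) (j : StructuredArrow c (Efun F)) :
    Quot.mk _ (⟨j.right, j.hom.val⟩ : Σ a : A, c.base ⟶ F.obj a) = c.cls := by
  have h : Gmap F j.hom.val
      (Quot.mk _ (⟨j.right, 𝟙 (F.obj j.right)⟩ : Σ x : A, F.obj j.right ⟶ F.obj x))
      = c.cls := j.hom.2
  erw [Gmap_mk] at h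
  have h1 : (⟨j.right, j.hom.val ≫ 𝟙 (F.obj j.right)⟩ : Σ a : A, c.base ⟶ F.obj a)
      = ⟨j.right, j.hom.val⟩ :=
    congrArg (fun t => (⟨j.right, t⟩ : Σ a : A, c.base ⟶ F.obj a)) (Category.comp_id _)
  have h2 : Quot.mk (CRel F c.base)
      (⟨j.right, j.hom.val ≫ 𝟙 (F.obj j.right)⟩ : Σ a : A, c.base ⟶ F.obj a) = c.cls := h
  rwa [h1] at h2

lemma Efun_final : (Efun F).Final := by
  constructor
  intro c
  obtain ⟨p, hp⟩ := Quot.exists_rep c.cls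
  haveI : Nonempty (StructuredArrow c (Efun F)) := ⟨sobj F c p hp⟩
  apply zigzag_isConnected
  intro j₁ j₂
  have e1 : j₁ = sobj F c ⟨j₁.right, j₁.hom.val⟩ (mk_of_obj F c j₁) := StructuredArrow.eq_mk j₁
  have e2 : j₂ = sobj F c ⟨j₂.right, j₂.hom.val⟩ (mk_of_obj F c j₂) := StructuredArrow.eq_mk j₂
  rw [e1, e2]
  exact szig F c _ _ (Quot.eq.mp ((mk_of_obj F c j₁).trans (mk_of_obj F c j₂).symm)) _ _

end Final


/-- Comprehensive factorization: every functor factors as a final functor followed by a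
discrete fibration, uniquely up to an equivalence compatible with both parts. -/
theorem comprehensive_factorization {A : Type u} [Category.{v} A] {B : Type u}
    [Category.{v} B] (F : A ⥤ B) :
    (∃ (C : Type (max u v)) (_ : Category.{v} C) (E : A ⥤ C) (D : C ⥤ B),
      E.Final ∧ IsDiscreteFibration D ∧ E ⋙ D = F) ∧
    (∀ (C : Type (max u v)) (_ : Category.{v} C) (E : A ⥤ C) (D : C ⥤ B)
      (C' : Type (max u v)) (_ : Category.{v} C') (E' : A ⥤ C') (D' : C' ⥤ B),
      E.Final → IsDiscreteFibration D → E ⋙ D = F →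
      E'.Final → IsDiscreteFibration D' → E' ⋙ D' = F →
      ∃ (I : C ≌ C'), Nonempty (E ⋙ I.functor ≅ E') ∧ Nonempty (I.functor ⋙ D' ≅ D)) := by
  constructor
  · exact ⟨Cobj F, CobjCat F, Efun F, Dfun F, Efun_final F, Dfun_df F, Efun_comp_Dfun F⟩
  · intro C instC E D C' instC' E' D' hE hD hc hE' hD' hc'
    have sq1 : E ⋙ D = E' ⋙ D' := hc.trans hc'.symm
    have sq2 : E' ⋙ D' = E ⋙ D := hc'.trans hc.symm
    let L : C ⥤ C' := Lf hE hD' sq1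
    let L' : C' ⥤ C := Lf hE' hD sq2
    have eL : E ⋙ L = E' := J_comp_Lf hE hD' sq1
    have pL : L ⋙ D' = D := Lf_comp_P hE hD' sq1
    have eL' : E' ⋙ L' = E := J_comp_Lf hE' hD sq2
    have pL' : L' ⋙ D = D' := Lf_comp_P hE' hD sq2
    have hLL' : L ⋙ L' = 𝟭 C := by
      refine lift_unique hE hD rfl (L ⋙ L') (𝟭 C) ?_ ?_ (Functor.comp_id E) (Functor.id_comp D)
      · rw [← Functor.assoc, eL, eL']
      · rw [Functor.assoc, pL', pL]
    have hL'L : L' ⋙ L = 𝟭 C' := by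
      refine lift_unique hE' hD' rfl (L' ⋙ L) (𝟭 C') ?_ ?_ (Functor.comp_id E')
        (Functor.id_comp D')
      · rw [← Functor.assoc, eL', eL]
      · rw [Functor.assoc, pL, pL']
    exact ⟨CategoryTheory.Equivalence.mk L L' (eqToIso hLL'.symm) (eqToIso hL'L),
      ⟨eqToIso eL⟩, ⟨eqToIso pL⟩⟩
end

section
/- Final functors are left orthogonal to discrete fibrations: given a commutative square D ∘ U = V ∘ E in Cat with E : A ⥤ A' final and D : X ⥤ Y a discrete fibration, there exists a unique functor W : A' ⥤ X with W ∘ E = U and D ∘ W = V. -/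
open CategoryTheory

universe w v u

namespace FinalDF

lemma sigma_hom_eq_iff {C : Type*} [Category C] {b b' c : C} (h : b = b') (β : b ⟶ c)
    (β' : b' ⟶ c) : (⟨b, β⟩ : Σ y, y ⟶ c) = ⟨b', β'⟩ ↔ β = eqToHom h ≫ β' := by
  subst h; simp

variable {A A' X Y : Type u} [Category.{v} A] [Category.{v} A'] [Category.{v} X] [Category.{v} Y]
variable {D : X ⥤ Y}

noncomputable def lift (hD : IsDiscreteFibration D) {x : X} {b : Y} (β : b ⟶ D.obj x) :
    Σ z, z ⟶ x := (hD β).exists.choose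

lemma lift_spec (hD : IsDiscreteFibration D) {x : X} {b : Y} (β : b ⟶ D.obj x) :
    (⟨D.obj (lift hD β).1, D.map (lift hD β).2⟩ : Σ y, y ⟶ D.obj x) = ⟨b, β⟩ :=
  (hD β).exists.choose_spec

lemma lift_unique (hD : IsDiscreteFibration D) {x : X} {b : Y} (β : b ⟶ D.obj x)
    (q : Σ z, z ⟶ x)
    (hq : (⟨D.obj q.1, D.map q.2⟩ : Σ y, y ⟶ D.obj x) = ⟨b, β⟩) : q = lift hD β :=
  (hD β).unique hq (lift_spec hD β)

lemma lift_fst (hD : IsDiscreteFibration D) {x : X} {b : Y} (β : b ⟶ D.obj x) :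
    D.obj (lift hD β).1 = b := congrArg Sigma.fst (lift_spec hD β)

lemma lift_snd (hD : IsDiscreteFibration D) {x : X} {b : Y} (β : b ⟶ D.obj x) :
    D.map (lift hD β).2 = eqToHom (lift_fst hD β) ≫ β :=
  (sigma_hom_eq_iff (lift_fst hD β) _ _).mp (lift_spec hD β)

lemma hom_ext (hD : IsDiscreteFibration D) {z x : X} (f g : z ⟶ x)
    (h : D.map f = D.map g) : f = g := by
  have h1 : (⟨z, f⟩ : Σ z, z ⟶ x) = lift hD (D.map g) :=
    lift_unique hD _ _ (by rw [h])
  have h2 : (⟨z, g⟩ : Σ z, z ⟶ x) = lift hD (D.map g) :=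
    lift_unique hD _ _ rfl
  simpa using h1.trans h2.symm

variable {E : A ⥤ A'} {U : A ⥤ X} {V : A' ⥤ Y}

section

variable (hsq : U ⋙ D = E ⋙ V)

include hsq

lemma sqObj (a : A) : D.obj (U.obj a) = V.obj (E.obj a) := Functor.congr_obj hsq a

def beta {a' : A'} (s : StructuredArrow a' E) : V.obj a' ⟶ D.obj (U.obj s.right) :=
  V.map s.hom ≫ eqToHom (sqObj hsq s.right).symm

noncomputable def w (hD : IsDiscreteFibration D) {a' : A'} (s : StructuredArrow a' E) :
    Σ z, z ⟶ U.obj s.right := lift hD (beta hsq s)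

lemma w_fst (hD : IsDiscreteFibration D) {a' : A'} (s : StructuredArrow a' E) :
    D.obj (w hsq hD s).1 = V.obj a' := lift_fst hD _

lemma w_snd (hD : IsDiscreteFibration D) {a' : A'} (s : StructuredArrow a' E) :
    D.map (w hsq hD s).2 = eqToHom (w_fst hsq hD s) ≫ beta hsq s := lift_snd hD _

lemma w_step (hD : IsDiscreteFibration D) {a' : A'} {s s' : StructuredArrow a' E}
    (t : s ⟶ s') :
    (⟨(w hsq hD s).1, (w hsq hD s).2 ≫ U.map t.right⟩ : Σ z, z ⟶ U.obj s'.right)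
      = w hsq hD s' := by
  apply lift_unique
  rw [sigma_hom_eq_iff (w_fst hsq hD s)]
  rw [D.map_comp, w_snd,
    show D.map (U.map t.right) = (U ⋙ D).map t.right from rfl, Functor.congr_hom hsq t.right]
  simp only [beta, Functor.comp_map, Category.assoc, eqToHom_trans, eqToHom_trans_assoc,
    eqToHom_refl, Category.id_comp, Category.comp_id, ← V.map_comp_assoc, ← V.map_comp]
  rw [StructuredArrow.w t]

lemma w_const (hD : IsDiscreteFibration D) (hE : E.Final) {a' : A'}
    (s s' : StructuredArrow a' E) : (w hsq hD s).1 = (w hsq hD s').1 := by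
  haveI := hE.out a'
  exact constant_of_preserves_morphisms (fun s => (w hsq hD s).1)
    (fun s s' t => congrArg Sigma.fst (w_step hsq hD t)) s s'

noncomputable def sArb (hE : E.Final) (a' : A') : StructuredArrow a' E :=
  haveI := hE.out a'
  Classical.arbitrary _

noncomputable def Wobj (hD : IsDiscreteFibration D) (hE : E.Final) (a' : A') : X :=
  (w hsq hD (sArb hE a')).1

lemma Wobj_fst (hD : IsDiscreteFibration D) (hE : E.Final) (a' : A') :
    D.obj (Wobj hsq hD hE a') = V.obj a' := w_fst hsq hD _

noncomputable def lmap (hD : IsDiscreteFibration D) (hE : E.Final) {a' a'' : A'}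
    (g : a' ⟶ a'') : Σ z, z ⟶ Wobj hsq hD hE a'' :=
  lift hD (V.map g ≫ eqToHom (Wobj_fst hsq hD hE a'').symm)

lemma lmap_fst' (hD : IsDiscreteFibration D) (hE : E.Final) {a' a'' : A'}
    (g : a' ⟶ a'') : D.obj (lmap hsq hD hE g).1 = V.obj a' := lift_fst hD _

lemma lmap_snd (hD : IsDiscreteFibration D) (hE : E.Final) {a' a'' : A'}
    (g : a' ⟶ a'') : D.map (lmap hsq hD hE g).2
      = eqToHom (lmap_fst' hsq hD hE g) ≫ V.map g ≫ eqToHom (Wobj_fst hsq hD hE a'').symm :=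
  lift_snd hD _

lemma lmap_fst (hD : IsDiscreteFibration D) (hE : E.Final) {a' a'' : A'}
    (g : a' ⟶ a'') : (lmap hsq hD hE g).1 = Wobj hsq hD hE a' := by
  have key : (⟨(lmap hsq hD hE g).1, (lmap hsq hD hE g).2 ≫ (w hsq hD (sArb hE a'')).2⟩ :
      Σ z, z ⟶ U.obj (sArb hE a'').right)
      = w hsq hD (StructuredArrow.mk (g ≫ (sArb hE a'').hom)) := by
    apply lift_unique
    dsimp only
    rw [sigma_hom_eq_iff (lmap_fst' hsq hD hE g)]
    erw [D.map_comp, lmap_snd, w_snd]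
    simp only [Wobj, beta, StructuredArrow.mk_hom_eq_self, StructuredArrow.mk_right,
      Category.assoc, eqToHom_trans, eqToHom_trans_assoc, eqToHom_refl, Category.id_comp,
      Category.comp_id, V.map_comp, V.map_comp_assoc]
    erw [eqToHom_trans_assoc, eqToHom_refl, Category.id_comp]
  have h1 := congrArg Sigma.fst key
  simpa [Wobj] using h1.trans
    (w_const hsq hD hE (StructuredArrow.mk (g ≫ (sArb hE a'').hom)) (sArb hE a'))

noncomputable def Wmap (hD : IsDiscreteFibration D) (hE : E.Final) {a' a'' : A'}
    (g : a' ⟶ a'') : Wobj hsq hD hE a' ⟶ Wobj hsq hD hE a'' :=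
  eqToHom (lmap_fst hsq hD hE g).symm ≫ (lmap hsq hD hE g).2

lemma Wmap_img (hD : IsDiscreteFibration D) (hE : E.Final) {a' a'' : A'}
    (g : a' ⟶ a'') : D.map (Wmap hsq hD hE g)
      = eqToHom (Wobj_fst hsq hD hE a') ≫ V.map g ≫ eqToHom (Wobj_fst hsq hD hE a'').symm := by
  erw [Wmap, D.map_comp, eqToHom_map, lmap_snd]
  simp

noncomputable def W (hD : IsDiscreteFibration D) (hE : E.Final) : A' ⥤ X where
  obj := Wobj hsq hD hE
  map := Wmap hsq hD hE
  map_id a' := hom_ext hD _ _ (by rw [Wmap_img]; simp)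
  map_comp f g := hom_ext hD _ _ (by rw [D.map_comp, Wmap_img, Wmap_img, Wmap_img]; simp)

lemma WobjE (hD : IsDiscreteFibration D) (hE : E.Final) (a : A) :
    Wobj hsq hD hE (E.obj a) = U.obj a := by
  have h1 : (⟨U.obj a, 𝟙 (U.obj a)⟩ : Σ z, z ⟶ U.obj a)
      = w hsq hD (StructuredArrow.mk (𝟙 (E.obj a))) := by
    apply lift_unique
    rw [sigma_hom_eq_iff (sqObj hsq a)]
    simp [beta]
  have h2 := w_const hsq hD hE (sArb hE (E.obj a)) (StructuredArrow.mk (𝟙 (E.obj a)))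
  erw [Wobj, h2, ← h1]

end

end FinalDF

/-- Final functors are left orthogonal to discrete fibrations. -/
theorem final_leftOrthogonal_discreteFibration {A A' X Y : Type u} [Category.{v} A]
    [Category.{v} A'] [Category.{v} X] [Category.{v} Y]
    (E : A ⥤ A') (D : X ⥤ Y) (U : A ⥤ X) (V : A' ⥤ Y)
    (hE : E.Final) (hD : IsDiscreteFibration D) (hsq : U ⋙ D = E ⋙ V) :
    ∃! W : A' ⥤ X, E ⋙ W = U ∧ W ⋙ D = V := by
  refine ⟨FinalDF.W hsq hD hE, ⟨?_, ?_⟩, ?_⟩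
  · -- E ⋙ W = U
    refine CategoryTheory.Functor.ext (fun a => FinalDF.WobjE hsq hD hE a) (fun a b f => ?_)
    apply FinalDF.hom_ext hD
    rw [Functor.comp_map, Functor.map_comp, Functor.map_comp]
    erw [eqToHom_map, eqToHom_map]
    show D.map (FinalDF.Wmap hsq hD hE (E.map f)) = _
    rw [FinalDF.Wmap_img, show D.map (U.map f) = (U ⋙ D).map f from rfl,
      Functor.congr_hom hsq f]
    simp
    rfl
  · -- W ⋙ D = V
    refine CategoryTheory.Functor.ext (fun a' => FinalDF.Wobj_fst hsq hD hE a') (fun a' a'' g => ?_)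
    show D.map (FinalDF.Wmap hsq hD hE g) = _
    rw [FinalDF.Wmap_img]
    rfl
  · -- uniqueness
    rintro W' ⟨hU', hV'⟩
    have hobj : ∀ a' : A', W'.obj a' = FinalDF.Wobj hsq hD hE a' := by
      intro a'
      have h1 : (⟨W'.obj a',
          W'.map (FinalDF.sArb hE a').hom ≫ eqToHom (Functor.congr_obj hU' (FinalDF.sArb hE a').right)⟩ :
          Σ z, z ⟶ U.obj (FinalDF.sArb hE a').right) = FinalDF.w hsq hD (FinalDF.sArb hE a') := by
        apply FinalDF.lift_unique
        dsimp only
        have hb : D.obj (W'.obj a') = V.obj a' := Functor.congr_obj hV' a'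
        rw [FinalDF.sigma_hom_eq_iff hb]
        rw [D.map_comp, eqToHom_map]
        have h2 : D.map (W'.map (FinalDF.sArb hE a').hom)
            = eqToHom (Functor.congr_obj hV' a') ≫ V.map (FinalDF.sArb hE a').hom
              ≫ eqToHom (Functor.congr_obj hV' (E.obj (FinalDF.sArb hE a').right)).symm :=
          Functor.congr_hom hV' (FinalDF.sArb hE a').hom
        rw [h2]
        simp [FinalDF.beta]
      exact congrArg Sigma.fst h1
    refine CategoryTheory.Functor.ext hobj (fun a' a'' g => ?_)
    apply FinalDF.hom_ext hD
    rw [Functor.map_comp, Functor.map_comp]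
    erw [eqToHom_map, eqToHom_map]
    have h2 : D.map (W'.map g) = eqToHom (Functor.congr_obj hV' a') ≫ V.map g
        ≫ eqToHom (Functor.congr_obj hV' a'').symm := Functor.congr_hom hV' g
    show _ = _ ≫ D.map (FinalDF.Wmap hsq hD hE g) ≫ _
    rw [h2, FinalDF.Wmap_img]
    simp
    erw [Category.assoc, Category.assoc, eqToHom_trans_assoc, eqToHom_trans]
end

section
/- Let A, B, C be groupoids and S : Bᵒᵖ × A ⥤ Type, T : Cᵒᵖ × B ⥤ Type distributors, with associated element categories 𝕊 ⥤ A × B and 𝕋 ⥤ B × C (discrete fibrations). Let T ⋄ S be the pullback of S₂ : 𝕊 ⥤ B along T₁ : 𝕋 ⥤ B, and let T ⊗ S be the coend composite distributor (T⊗S)(c,a) = ∫^b T(c,b) × S(b,a). Then the canonical functor Q : T ⋄ S ⥤ 𝕋⊗𝕊 into the category of elements of T ⊗ S, sending ((s,t), pairs of morphisms) to the class s ⊗ t, is a final functor. -/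
open CategoryTheory Opposite

universe w v u

section PairLemmas

universe u1 v1 u2 v2

variable {X : Type u1} [Category.{v1} X] {Y : Type u2} [Category.{v2} Y]

lemma pair_comp_fst {x1 x2 x3 : X} {y : Y} (f : x1 ⟶ x2) (g : x2 ⟶ x3) :
    @CategoryStruct.comp (X × Y) _ (x1, y) (x2, y) (x3, y) (f, 𝟙 y) (g, 𝟙 y) =
      (f ≫ g, 𝟙 y) := by
  simp [prod_comp]

lemma pair_comp_snd {x : X} {y1 y2 y3 : Y} (f : y1 ⟶ y2) (g : y2 ⟶ y3) :
    @CategoryStruct.comp (X × Y) _ (x, y1) (x, y2) (x, y3) (𝟙 x, f) (𝟙 x, g) =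
      (𝟙 x, f ≫ g) := by
  simp [prod_comp]

lemma pair_swap {x1 x2 : X} {y1 y2 : Y} (f : x1 ⟶ x2) (g : y1 ⟶ y2) :
    @CategoryStruct.comp (X × Y) _ (x1, y1) (x2, y1) (x2, y2) (f, 𝟙 y1) (𝟙 x2, g) =
      @CategoryStruct.comp (X × Y) _ (x1, y1) (x1, y2) (x2, y2) (𝟙 x1, g) (f, 𝟙 y2) := by
  simp [prod_comp]

end PairLemmas

section Distrib

variable {A : Type u} [Groupoid.{u} A] {B : Type u} [Groupoid.{u} B]

/-- Compatibility of the two actions of a distributor with composition. -/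
lemma dist_comm_comp (S : Bᵒᵖ × A ⥤ Type u)
    {a1 a2 a3 : A} {b1 b2 b3 : B} (α1 : a1 ⟶ a2) (α2 : a2 ⟶ a3)
    (β1 : b1 ⟶ b2) (β2 : b2 ⟶ b3)
    {s1 : S.obj (op b1, a1)} {s2 : S.obj (op b2, a2)} {s3 : S.obj (op b3, a3)}
    (h1 : S.map ((𝟙 (op b1), α1) : (op b1, a1) ⟶ (op b1, a2)) s1 =
      S.map ((β1.op, 𝟙 a2) : (op b2, a2) ⟶ (op b1, a2)) s2)
    (h2 : S.map ((𝟙 (op b2), α2) : (op b2, a2) ⟶ (op b2, a3)) s2 =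
      S.map ((β2.op, 𝟙 a3) : (op b3, a3) ⟶ (op b2, a3)) s3) :
    S.map ((𝟙 (op b1), α1 ≫ α2) : (op b1, a1) ⟶ (op b1, a3)) s1 =
      S.map (((β1 ≫ β2).op, 𝟙 a3) : (op b3, a3) ⟶ (op b1, a3)) s3 := by
  calc S.map ((𝟙 (op b1), α1 ≫ α2) : (op b1, a1) ⟶ (op b1, a3)) s1
      = S.map ((𝟙 (op b1), α2) : (op b1, a2) ⟶ (op b1, a3))
          (S.map ((𝟙 (op b1), α1) : (op b1, a1) ⟶ (op b1, a2)) s1) := by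
        rw [← FunctorToTypes.map_comp_apply]; congr 3; simp [prod_comp]
    _ = S.map ((𝟙 (op b1), α2) : (op b1, a2) ⟶ (op b1, a3))
          (S.map ((β1.op, 𝟙 a2) : (op b2, a2) ⟶ (op b1, a2)) s2) := by rw [h1]
    _ = S.map ((β1.op, 𝟙 a3) : (op b2, a3) ⟶ (op b1, a3))
          (S.map ((𝟙 (op b2), α2) : (op b2, a2) ⟶ (op b2, a3)) s2) := by
        rw [← FunctorToTypes.map_comp_apply, ← FunctorToTypes.map_comp_apply]
        congr 2; simp [prod_comp]
    _ = S.map ((β1.op, 𝟙 a3) : (op b2, a3) ⟶ (op b1, a3))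
          (S.map ((β2.op, 𝟙 a3) : (op b3, a3) ⟶ (op b2, a3)) s3) := by rw [h2]
    _ = S.map (((β1 ≫ β2).op, 𝟙 a3) : (op b3, a3) ⟶ (op b1, a3)) s3 := by
        rw [← FunctorToTypes.map_comp_apply]; congr 3; simp [prod_comp]

end Distrib

/-- The category of elements `𝕊` of a distributor `S : Bᵒᵖ × A ⥤ Type`. -/
structure Delt {A : Type u} [Groupoid.{u} A] {B : Type u} [Groupoid.{u} B]
    (S : Bᵒᵖ × A ⥤ Type u) where
  a : A
  b : B
  s : S.obj (op b, a)

namespace Delt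

variable {A : Type u} [Groupoid.{u} A] {B : Type u} [Groupoid.{u} B] {S : Bᵒᵖ × A ⥤ Type u}

/-- Morphisms in the category of elements of a distributor. -/
@[ext]
structure Hom (X Y : Delt S) where
  α : X.a ⟶ Y.a
  β : X.b ⟶ Y.b
  comm : S.map ((𝟙 (op X.b), α) : (op X.b, X.a) ⟶ (op X.b, Y.a)) X.s =
      S.map ((β.op, 𝟙 Y.a) : (op Y.b, Y.a) ⟶ (op X.b, Y.a)) Y.s

instance : Category (Delt S) where
  Hom := Hom
  id X := ⟨𝟙 X.a, 𝟙 X.b, by simp⟩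
  comp {X Y Z} f g := ⟨f.α ≫ g.α, f.β ≫ g.β, dist_comm_comp S f.α g.α f.β g.β f.comm g.comm⟩
  id_comp f := by apply Hom.ext <;> simp
  comp_id f := by apply Hom.ext <;> simp
  assoc f g h := by apply Hom.ext <;> simp

/-- The projection `𝕊 ⥤ A × B`. -/
def proj (S : Bᵒᵖ × A ⥤ Type u) : Delt S ⥤ A × B where
  obj X := (X.a, X.b)
  map {X Y} f := (Hom.α f, Hom.β f)
  map_id X := rfl
  map_comp f g := rfl

end Delt

section Tensor

variable {A : Type u} [Groupoid.{u} A] {B : Type u} [Groupoid.{u} B]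
  {C : Type u} [Groupoid.{u} C]

/-- The relation generating the coend quotient: `(t, s'·β) ∼ (β·t, s')`. -/
def TensorRel (S : Bᵒᵖ × A ⥤ Type u) (T : Cᵒᵖ × B ⥤ Type u) (c : Cᵒᵖ) (a : A) :
    (Σ b : B, T.obj (c, b) × S.obj (op b, a)) →
    (Σ b : B, T.obj (c, b) × S.obj (op b, a)) → Prop :=
  fun p q => ∃ β : p.1 ⟶ q.1,
    q.2.1 = T.map ((𝟙 c, β) : (c, p.1) ⟶ (c, q.1)) p.2.1 ∧
    p.2.2 = S.map ((β.op, 𝟙 a) : (op q.1, a) ⟶ (op p.1, a)) q.2.2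

/-- The composite distributor `T ⊗ S`, given by the coend
`(T ⊗ S)(c,a) = ∫^b T(c,b) × S(b,a)`. -/
def Tensor (S : Bᵒᵖ × A ⥤ Type u) (T : Cᵒᵖ × B ⥤ Type u) : Cᵒᵖ × A ⥤ Type u where
  obj x := Quot (TensorRel S T x.1 x.2)
  map {x y} f := TypeCat.ofHom (Quot.map
    (fun p => ⟨p.1, T.map ((f.1, 𝟙 p.1) : (x.1, p.1) ⟶ (y.1, p.1)) p.2.1,
      S.map ((𝟙 (op p.1), f.2) : (op p.1, x.2) ⟶ (op p.1, y.2)) p.2.2⟩)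
    (by
      rintro ⟨b, t, s⟩ ⟨b', t', s'⟩ ⟨β, h1, h2⟩
      dsimp only at h1 h2 ⊢
      refine ⟨β, ?_, ?_⟩
      · rw [h1, ← FunctorToTypes.map_comp_apply, ← FunctorToTypes.map_comp_apply, pair_swap]
      · rw [h2, ← FunctorToTypes.map_comp_apply, ← FunctorToTypes.map_comp_apply, pair_swap]))
  map_id x := by
    ext q; refine Quot.inductionOn q fun p => ?_
    obtain ⟨b, t, s⟩ := p
    show Quot.mk (TensorRel S T x.1 x.2)
        ⟨b, T.map ((𝟙 x.1, 𝟙 b) : (x.1, b) ⟶ (x.1, b)) t,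
          S.map ((𝟙 (op b), 𝟙 x.2) : (op b, x.2) ⟶ (op b, x.2)) s⟩ =
      Quot.mk (TensorRel S T x.1 x.2) ⟨b, t, s⟩
    have e1 : T.map ((𝟙 x.1, 𝟙 b) : (x.1, b) ⟶ (x.1, b)) t = t := by
      rw [show ((𝟙 x.1, 𝟙 b) : (x.1, b) ⟶ (x.1, b)) = 𝟙 (x.1, b) from rfl,
        FunctorToTypes.map_id_apply]
    have e2 : S.map ((𝟙 (op b), 𝟙 x.2) : (op b, x.2) ⟶ (op b, x.2)) s = s := by
      rw [show ((𝟙 (op b), 𝟙 x.2) : (op b, x.2) ⟶ (op b, x.2)) = 𝟙 (op b, x.2) from rfl,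
        FunctorToTypes.map_id_apply]
    rw [e1, e2]
  map_comp {x y z} f g := by
    ext q; refine Quot.inductionOn q fun p => ?_
    obtain ⟨b, t, s⟩ := p
    show Quot.mk (TensorRel S T z.1 z.2)
        ⟨b, T.map ((f.1 ≫ g.1, 𝟙 b) : (x.1, b) ⟶ (z.1, b)) t,
          S.map ((𝟙 (op b), f.2 ≫ g.2) : (op b, x.2) ⟶ (op b, z.2)) s⟩ =
      Quot.mk (TensorRel S T z.1 z.2)
        ⟨b, T.map ((g.1, 𝟙 b) : (y.1, b) ⟶ (z.1, b))
              (T.map ((f.1, 𝟙 b) : (x.1, b) ⟶ (y.1, b)) t),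
          S.map ((𝟙 (op b), g.2) : (op b, y.2) ⟶ (op b, z.2))
            (S.map ((𝟙 (op b), f.2) : (op b, x.2) ⟶ (op b, y.2)) s)⟩
    have e1 : T.map ((f.1 ≫ g.1, 𝟙 b) : (x.1, b) ⟶ (z.1, b)) t =
        T.map ((g.1, 𝟙 b) : (y.1, b) ⟶ (z.1, b))
          (T.map ((f.1, 𝟙 b) : (x.1, b) ⟶ (y.1, b)) t) := by
      rw [← pair_comp_fst, FunctorToTypes.map_comp_apply]
    have e2 : S.map ((𝟙 (op b), f.2 ≫ g.2) : (op b, x.2) ⟶ (op b, z.2)) s =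
        S.map ((𝟙 (op b), g.2) : (op b, y.2) ⟶ (op b, z.2))
          (S.map ((𝟙 (op b), f.2) : (op b, x.2) ⟶ (op b, y.2)) s) := by
      rw [← pair_comp_snd, FunctorToTypes.map_comp_apply]
    rw [e1, e2]

end Tensor

section Diamond

variable {A : Type u} [Groupoid.{u} A] {B : Type u} [Groupoid.{u} B]
  {C : Type u} [Groupoid.{u} C]

/-- The (strict) pullback `T ⋄ S` of the two element categories `𝕊 ⥤ B` and `𝕋 ⥤ B`. -/
structure Diamond (S : Bᵒᵖ × A ⥤ Type u) (T : Cᵒᵖ × B ⥤ Type u) where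
  a : A
  b : B
  c : C
  s : S.obj (op b, a)
  t : T.obj (op c, b)

namespace Diamond

variable {S : Bᵒᵖ × A ⥤ Type u} {T : Cᵒᵖ × B ⥤ Type u}

/-- Morphisms in the pullback `T ⋄ S`. -/
@[ext]
structure Hom (X Y : Diamond S T) where
  α : X.a ⟶ Y.a
  β : X.b ⟶ Y.b
  γ : X.c ⟶ Y.c
  commS : S.map ((𝟙 (op X.b), α) : (op X.b, X.a) ⟶ (op X.b, Y.a)) X.s =
      S.map ((β.op, 𝟙 Y.a) : (op Y.b, Y.a) ⟶ (op X.b, Y.a)) Y.s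
  commT : T.map ((𝟙 (op X.c), β) : (op X.c, X.b) ⟶ (op X.c, Y.b)) X.t =
      T.map ((γ.op, 𝟙 Y.b) : (op Y.c, Y.b) ⟶ (op X.c, Y.b)) Y.t

instance : Category (Diamond S T) where
  Hom := Hom
  id X := ⟨𝟙 X.a, 𝟙 X.b, 𝟙 X.c, by simp, by simp⟩
  comp {X Y Z} f g := ⟨f.α ≫ g.α, f.β ≫ g.β, f.γ ≫ g.γ,
    dist_comm_comp S f.α g.α f.β g.β f.commS g.commS,
    dist_comm_comp T f.β g.β f.γ g.γ f.commT g.commT⟩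
  id_comp f := by apply Hom.ext <;> simp
  comp_id f := by apply Hom.ext <;> simp
  assoc f g h := by apply Hom.ext <;> simp

/-- The projection of the pullback span to `A × C`. -/
def proj (S : Bᵒᵖ × A ⥤ Type u) (T : Cᵒᵖ × B ⥤ Type u) : Diamond S T ⥤ A × C where
  obj X := (X.a, X.c)
  map {X Y} f := (Hom.α f, Hom.γ f)
  map_id X := rfl
  map_comp f g := rfl

end Diamond

/-- The canonical comparison functor `T ⋄ S ⥤ 𝕋 ⊗ 𝕊` from the pullback of the element
categories to the category of elements of the composite distributor, sending `(s, t)` to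
the class `s ⊗ t`. -/
def Qfun (S : Bᵒᵖ × A ⥤ Type u) (T : Cᵒᵖ × B ⥤ Type u) :
    Diamond S T ⥤ Delt (Tensor S T) where
  obj X := ⟨X.a, X.c, Quot.mk _ ⟨X.b, X.t, X.s⟩⟩
  map {X Y} f := ⟨Diamond.Hom.α f, Diamond.Hom.γ f, by
    show Quot.mk (TensorRel S T (op X.c) Y.a)
        ⟨X.b, T.map ((𝟙 (op X.c), 𝟙 X.b) : (op X.c, X.b) ⟶ (op X.c, X.b)) X.t,
          S.map ((𝟙 (op X.b), f.α) : (op X.b, X.a) ⟶ (op X.b, Y.a)) X.s⟩ =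
      Quot.mk (TensorRel S T (op X.c) Y.a)
        ⟨Y.b, T.map ((f.γ.op, 𝟙 Y.b) : (op Y.c, Y.b) ⟶ (op X.c, Y.b)) Y.t,
          S.map ((𝟙 (op Y.b), 𝟙 Y.a) : (op Y.b, Y.a) ⟶ (op Y.b, Y.a)) Y.s⟩
    have e1 : T.map ((𝟙 (op X.c), 𝟙 X.b) : (op X.c, X.b) ⟶ (op X.c, X.b)) X.t = X.t := by
      rw [show ((𝟙 (op X.c), 𝟙 X.b) : (op X.c, X.b) ⟶ (op X.c, X.b)) = 𝟙 (op X.c, X.b)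
        from rfl, FunctorToTypes.map_id_apply]
    have e2 : S.map ((𝟙 (op Y.b), 𝟙 Y.a) : (op Y.b, Y.a) ⟶ (op Y.b, Y.a)) Y.s = Y.s := by
      rw [show ((𝟙 (op Y.b), 𝟙 Y.a) : (op Y.b, Y.a) ⟶ (op Y.b, Y.a)) = 𝟙 (op Y.b, Y.a)
        from rfl, FunctorToTypes.map_id_apply]
    rw [e1, e2]
    exact Quot.sound ⟨Diamond.Hom.β f, (Diamond.Hom.commT f).symm, Diamond.Hom.commS f⟩⟩
  map_id X := by apply Delt.Hom.ext <;> rfl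
  map_comp f g := by apply Delt.Hom.ext <;> rfl

section FinalAux

variable {A : Type u} [Groupoid.{u} A] {B : Type u} [Groupoid.{u} B]
  {C : Type u} [Groupoid.{u} C] (S : Bᵒᵖ × A ⥤ Type u) (T : Cᵒᵖ × B ⥤ Type u)
  (a : A) (c : C)

/-- The normal form structured arrow associated to a representative `p` of `q`. -/
def NF (q : (Tensor S T).obj (op c, a))
    (p : Σ b : B, T.obj (op c, b) × S.obj (op b, a))
    (hp : Quot.mk (TensorRel S T (op c) a) p = q) :
    StructuredArrow (⟨a, c, q⟩ : Delt (Tensor S T)) (Qfun S T) :=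
  StructuredArrow.mk (Y := (⟨a, p.1, c, p.2.2, p.2.1⟩ : Diamond S T))
    (⟨𝟙 a, 𝟙 c, by
      have e1 : ((𝟙 (op c), 𝟙 a) : (op c, a) ⟶ (op c, a)) = 𝟙 (op c, a) := rfl
      have e2 : (((𝟙 c).op, 𝟙 a) : (op c, a) ⟶ (op c, a)) = 𝟙 (op c, a) := rfl
      show (Tensor S T).map ((𝟙 (op c), 𝟙 a) : (op c, a) ⟶ (op c, a)) q =
        (Tensor S T).map (((𝟙 c).op, 𝟙 a) : (op c, a) ⟶ (op c, a))
          (show (Tensor S T).obj (op c, a) from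
            Quot.mk (TensorRel S T (op c) a) ⟨p.1, p.2.1, p.2.2⟩)
      rw [e1, e2, FunctorToTypes.map_id_apply, FunctorToTypes.map_id_apply, ← hp]⟩ :
      (⟨a, c, q⟩ : Delt (Tensor S T)) ⟶ (Qfun S T).obj ⟨a, p.1, c, p.2.2, p.2.1⟩)

/-- Normal forms attached to `TensorRel`-related representatives are connected by a
morphism of structured arrows. -/
lemma NFhom (q : (Tensor S T).obj (op c, a))
    (p p' : Σ b : B, T.obj (op c, b) × S.obj (op b, a))
    (hp : Quot.mk (TensorRel S T (op c) a) p = q)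
    (hp' : Quot.mk (TensorRel S T (op c) a) p' = q)
    (h : TensorRel S T (op c) a p p') :
    Nonempty (NF S T a c q p hp ⟶ NF S T a c q p' hp') := by
  obtain ⟨β, h1, h2⟩ := h
  refine ⟨StructuredArrow.homMk
    (⟨𝟙 a, β, 𝟙 c, ?_, ?_⟩ :
      (⟨a, p.1, c, p.2.2, p.2.1⟩ : Diamond S T) ⟶ ⟨a, p'.1, c, p'.2.2, p'.2.1⟩) ?_⟩
  · show S.map ((𝟙 (op p.1), 𝟙 a) : (op p.1, a) ⟶ (op p.1, a)) p.2.2 =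
      S.map ((β.op, 𝟙 a) : (op p'.1, a) ⟶ (op p.1, a)) p'.2.2
    rw [show ((𝟙 (op p.1), 𝟙 a) : (op p.1, a) ⟶ (op p.1, a)) = 𝟙 (op p.1, a) from rfl,
      FunctorToTypes.map_id_apply]
    exact h2
  · show T.map ((𝟙 (op c), β) : (op c, p.1) ⟶ (op c, p'.1)) p.2.1 =
      T.map (((𝟙 c).op, 𝟙 p'.1) : (op c, p'.1) ⟶ (op c, p'.1)) p'.2.1
    rw [show (((𝟙 c).op, 𝟙 p'.1) : (op c, p'.1) ⟶ (op c, p'.1)) = 𝟙 (op c, p'.1) from rfl,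
      FunctorToTypes.map_id_apply]
    exact h1.symm
  · apply Delt.Hom.ext
    · show 𝟙 a ≫ 𝟙 a = 𝟙 a; simp
    · show 𝟙 c ≫ 𝟙 c = 𝟙 c; simp

/-- Every structured arrow receives a morphism from a normal form. -/
lemma exists_nf (q : (Tensor S T).obj (op c, a))
    (g : StructuredArrow (⟨a, c, q⟩ : Delt (Tensor S T)) (Qfun S T)) :
    ∃ (p : Σ b : B, T.obj (op c, b) × S.obj (op b, a))
      (hp : Quot.mk (TensorRel S T (op c) a) p = q),
      Nonempty (NF S T a c q p hp ⟶ g) := by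
  obtain ⟨⟨⟨⟩⟩, X, f⟩ := g
  obtain ⟨α₀, γ₀, comm₀⟩ := f
  -- α : a ⟶ X.a, γ : c ⟶ X.c
  let α : a ⟶ X.a := α₀
  let γ : c ⟶ X.c := γ₀
  have comm : (Tensor S T).map ((𝟙 (op c), α) : (op c, a) ⟶ (op c, X.a)) q =
      (Tensor S T).map ((γ.op, 𝟙 X.a) : (op X.c, X.a) ⟶ (op c, X.a))
        (show (Tensor S T).obj (op X.c, X.a) from
          Quot.mk (TensorRel S T (op X.c) X.a) ⟨X.b, X.t, X.s⟩) := comm₀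
  refine ⟨⟨X.b, T.map ((γ.op, 𝟙 X.b) : (op X.c, X.b) ⟶ (op c, X.b)) X.t,
      S.map ((𝟙 (op X.b), Groupoid.inv α) : (op X.b, X.a) ⟶ (op X.b, a)) X.s⟩, ?_, ?_⟩
  · -- apply (Tensor S T).map (𝟙, α⁻¹) to comm
    have := congrArg ((Tensor S T).map
      ((𝟙 (op c), Groupoid.inv α) : (op c, X.a) ⟶ (op c, a))) comm
    rw [← FunctorToTypes.map_comp_apply, ← FunctorToTypes.map_comp_apply] at this
    rw [pair_comp_snd, Groupoid.comp_inv] at this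
    rw [show ((𝟙 (op c), 𝟙 a) : (op c, a) ⟶ (op c, a)) = 𝟙 (op c, a) from rfl,
      FunctorToTypes.map_id_apply] at this
    refine Eq.trans ?_ this.symm
    show Quot.mk (TensorRel S T (op c) a)
        ⟨X.b, T.map ((γ.op, 𝟙 X.b) : (op X.c, X.b) ⟶ (op c, X.b)) X.t,
          S.map ((𝟙 (op X.b), Groupoid.inv α) : (op X.b, X.a) ⟶ (op X.b, a)) X.s⟩ =
      Quot.mk (TensorRel S T (op c) a)
        ⟨X.b, T.map ((γ.op ≫ 𝟙 (op c), 𝟙 X.b) : (op X.c, X.b) ⟶ (op c, X.b)) X.t,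
          S.map ((𝟙 (op X.b), 𝟙 X.a ≫ Groupoid.inv α) :
            (op X.b, X.a) ⟶ (op X.b, a)) X.s⟩
    congr 3 <;> simp
  · refine ⟨StructuredArrow.homMk
      (⟨α, 𝟙 X.b, γ, ?_, ?_⟩ :
        (⟨a, X.b, c, _, _⟩ : Diamond S T) ⟶ X) ?_⟩
    · show S.map ((𝟙 (op X.b), α) : (op X.b, a) ⟶ (op X.b, X.a))
          (S.map ((𝟙 (op X.b), Groupoid.inv α) : (op X.b, X.a) ⟶ (op X.b, a)) X.s) =
        S.map (((𝟙 X.b).op, 𝟙 X.a) : (op X.b, X.a) ⟶ (op X.b, X.a)) X.s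
      rw [← FunctorToTypes.map_comp_apply, pair_comp_snd, Groupoid.inv_comp]
      rw [show ((𝟙 (op X.b), 𝟙 X.a) : (op X.b, X.a) ⟶ (op X.b, X.a)) = 𝟙 (op X.b, X.a)
        from rfl, FunctorToTypes.map_id_apply]
      rw [show (((𝟙 X.b).op, 𝟙 X.a) : (op X.b, X.a) ⟶ (op X.b, X.a)) = 𝟙 (op X.b, X.a)
        from rfl, FunctorToTypes.map_id_apply]
    · show T.map ((𝟙 (op c), 𝟙 X.b) : (op c, X.b) ⟶ (op c, X.b))
          (T.map ((γ.op, 𝟙 X.b) : (op X.c, X.b) ⟶ (op c, X.b)) X.t) =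
        T.map ((γ.op, 𝟙 X.b) : (op X.c, X.b) ⟶ (op c, X.b)) X.t
      rw [show ((𝟙 (op c), 𝟙 X.b) : (op c, X.b) ⟶ (op c, X.b)) = 𝟙 (op c, X.b) from rfl,
        FunctorToTypes.map_id_apply]
    · apply Delt.Hom.ext
      · show 𝟙 a ≫ α = α₀; rw [Category.id_comp]
      · show 𝟙 c ≫ γ = γ₀; rw [Category.id_comp]

end FinalAux

/-- The canonical comparison functor from the pullback `T ⋄ S` of the element categories to
the category of elements of the composite distributor `T ⊗ S` is final. -/
theorem Qfun_final {A : Type u} [Groupoid.{u} A] {B : Type u} [Groupoid.{u} B]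
    {C : Type u} [Groupoid.{u} C] (S : Bᵒᵖ × A ⥤ Type u) (T : Cᵒᵖ × B ⥤ Type u) :
    (Qfun S T).Final := by
  constructor
  rintro ⟨a, c, q⟩
  obtain ⟨p₀, hp₀⟩ := Quot.exists_rep q
  have hne : Nonempty (StructuredArrow (⟨a, c, q⟩ : Delt (Tensor S T)) (Qfun S T)) :=
    ⟨NF S T a c q p₀ hp₀⟩
  have key : ∀ (p p' : Σ b : B, T.obj (op c, b) × S.obj (op b, a)),
      Relation.EqvGen (TensorRel S T (op c) a) p p' →
      ∀ (hp : Quot.mk (TensorRel S T (op c) a) p = q)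
        (hp' : Quot.mk (TensorRel S T (op c) a) p' = q),
        Zigzag (NF S T a c q p hp) (NF S T a c q p' hp') := by
    intro p p' h
    induction h with
    | rel x y hxy =>
        intro hp hp'
        exact Zigzag.of_hom (NFhom S T a c q x y hp hp' hxy).some
    | refl x =>
        intro hp hp'
        exact Relation.ReflTransGen.refl
    | symm x y hxy ih =>
        intro hp hp'
        exact (ih hp' hp).symm
    | trans x y z hxy hyz ih₁ ih₂ =>
        intro hp hp'
        have hy : Quot.mk (TensorRel S T (op c) a) y = q := by
          rw [← hp]; exact (Quot.eqvGen_sound hxy).symm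
        exact (ih₁ hp hy).trans (ih₂ hy hp')
  have := hne
  refine zigzag_isConnected fun g₁ g₂ => ?_
  obtain ⟨p₁, hp₁, ⟨f₁⟩⟩ := exists_nf S T a c q g₁
  obtain ⟨p₂, hp₂, ⟨f₂⟩⟩ := exists_nf S T a c q g₂
  refine ((Zigzag.of_hom f₁).symm.trans ?_).trans (Zigzag.of_hom f₂)
  exact key p₁ p₂ (Quot.eqvGen_exact (hp₁.trans hp₂.symm)) hp₁ hp₂
end Diamond
end
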